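/- Let U be a finite field and (A, p_A) an ensemble of l×n matrices over U such that p_A({A : Au = 0}) depends on u only through the type (empirical distribution) of u. Fix a set Ĥ of types of length n (excluding the all-zero type), define α ≡ (|Im A|/|U|^l)·max_{t∈Ĥ} S(p_A,t)/S(u_A,t) and β ≡ Σ_{t∉Ĥ} S(p_A,t), where S(p,t) is the expected number of nonzero vectors u with Au = 0 and type t, and u_A is the uniform distribution on all l×n matrices. Then for every u ∈ U^n: Σ over u' ≠ u with p_A({A : Au = Au'}) > α/|Im A| of p_A({A : Au = Au'}) ≤ β; i.e., (A, p_A) satisfies the strong (α,β)-hash condition. -/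

import Mathlib

open Finset
open scoped Classical

/-- Collision probability `p_A({A : Au = Au'})` for an ensemble of functions. -/
noncomputable def collP {𝒜 X B : Type*} [Fintype 𝒜] (p : 𝒜 → ℝ)
    (F : 𝒜 → X → B) (u u' : X) : ℝ :=
  ∑ a : 𝒜, if F a u = F a u' then p a else 0

/-- The type (empirical count vector) of a sequence. -/
def typeOf {U : Type*} [DecidableEq U] {n : ℕ} (u : Fin n → U) : U → ℕ :=
  fun x => (Finset.univ.filter fun i => u i = x).card

/-- Average spectrum `S(p,t)`: expected number of vectors of type `t` in the kernel. -/
noncomputable def Sspec {U 𝒜 : Type*} [Field U] [Fintype U] [DecidableEq U]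
    [Fintype 𝒜] {l n : ℕ} (p : 𝒜 → ℝ) (M : 𝒜 → Matrix (Fin l) (Fin n) U)
    (t : U → ℕ) : ℝ :=
  ∑ a : 𝒜, p a *
    ((Finset.univ.filter fun u : Fin n → U =>
        (M a).mulVec u = 0 ∧ typeOf u = t).card : ℝ)

/-- counting matrices annihilating a fixed nonzero vector -/
lemma card_ker_mulVec {U : Type*} [Field U] [Fintype U] [DecidableEq U] {l n : ℕ}
    (w : Fin n → U) (hw : w ≠ 0) :
    ((Finset.univ.filter fun A : Matrix (Fin l) (Fin n) U => A.mulVec w = 0).card)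
      * (Fintype.card U) ^ l = Fintype.card (Matrix (Fin l) (Fin n) U) := by
  let φ : Matrix (Fin l) (Fin n) U →+ (Fin l → U) :=
    { toFun := fun A => A.mulVec w
      map_zero' := Matrix.zero_mulVec w
      map_add' := fun A B => Matrix.add_mulVec A B w }
  have hsurj : Function.Surjective φ := by
    intro b
    obtain ⟨j, hj⟩ := Function.ne_iff.mp hw
    simp only [Pi.zero_apply] at hj
    refine ⟨Matrix.of (fun i k => if k = j then b i * (w j)⁻¹ else 0), ?_⟩
    funext i
    simp only [φ, AddMonoidHom.coe_mk, ZeroHom.coe_mk, Matrix.mulVec, dotProduct,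
      Matrix.of_apply, ite_mul, zero_mul]
    rw [Finset.sum_ite_eq' Finset.univ j (fun k => b i * (w j)⁻¹ * w k)]
    simp only [Finset.mem_univ, if_true]
    field_simp
  have h1 : Nat.card (Matrix (Fin l) (Fin n) U)
      = Nat.card ((Matrix (Fin l) (Fin n) U) ⧸ φ.ker) * Nat.card φ.ker :=
    AddSubgroup.card_eq_card_quotient_mul_card_addSubgroup _
  have h2 : Nat.card ((Matrix (Fin l) (Fin n) U) ⧸ φ.ker) = Nat.card (Fin l → U) :=
    Nat.card_congr (QuotientAddGroup.quotientKerEquivOfSurjective φ hsurj).toEquiv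
  have h3 : Nat.card φ.ker
      = (Finset.univ.filter fun A : Matrix (Fin l) (Fin n) U => A.mulVec w = 0).card := by
    rw [Nat.card_eq_fintype_card, ← Fintype.card_subtype]
    exact Fintype.card_congr (Equiv.subtypeEquivRight (fun A => by
      simp [φ, AddMonoidHom.mem_ker]))
  have h4 : Nat.card (Fin l → U) = (Fintype.card U) ^ l := by
    simp [Nat.card_eq_fintype_card]
  rw [h2, h3, h4, Nat.card_eq_fintype_card] at h1
  rw [h1]; ring

/-- rewriting the average spectrum as a sum over vectors of given type -/
lemma Sspec_eq {U 𝒜 : Type*} [Field U] [Fintype U] [DecidableEq U] [Fintype 𝒜]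
    {l n : ℕ} (p : 𝒜 → ℝ) (M : 𝒜 → Matrix (Fin l) (Fin n) U) (t : U → ℕ) :
    Sspec p M t = ∑ w ∈ Finset.univ.filter (fun w : Fin n → U => typeOf w = t),
      ∑ a : 𝒜, if (M a).mulVec w = 0 then p a else 0 := by
  unfold Sspec
  rw [Finset.sum_comm]
  apply Finset.sum_congr rfl
  intro a _
  have hfil : (Finset.univ.filter fun u : Fin n → U => (M a).mulVec u = 0 ∧ typeOf u = t)
      = ((Finset.univ.filter fun u : Fin n → U => typeOf u = t).filter
          (fun u => (M a).mulVec u = 0)) := by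
    rw [Finset.filter_filter]
    ext w
    simp only [Finset.mem_filter, Finset.mem_univ, true_and]
    exact and_comm
  rw [hfil, ← Finset.sum_filter, Finset.sum_const, nsmul_eq_mul, mul_comm]

lemma typeOf_zero_eq {U : Type*} [DecidableEq U] [Zero U] {n : ℕ} (w : Fin n → U)
    (h : typeOf w = typeOf (0 : Fin n → U)) : w = 0 := by
  funext i
  by_contra hi
  have h2 := congrFun h (w i)
  unfold typeOf at h2
  have hl : 0 < (Finset.univ.filter fun j => w j = w i).card :=
    Finset.card_pos.mpr ⟨i, Finset.mem_filter.mpr ⟨Finset.mem_univ i, rfl⟩⟩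
  have hr : (Finset.univ.filter fun j : Fin n => (0 : Fin n → U) j = w i).card = 0 := by
    rw [Finset.card_eq_zero, Finset.filter_eq_empty_iff]
    intro j _
    simp only [Pi.zero_apply]
    exact fun h0 => hi (by simpa [Pi.zero_apply] using h0.symm)
  omega

/-- An ensemble of matrices whose kernel probability depends on a vector only through its
type satisfies the strong (α,β)-hash condition, with α, β defined from the average
spectrum relative to the uniform matrix ensemble. -/
theorem stmt6 {U 𝒜 : Type*} [Field U] [Fintype U] [DecidableEq U] [Fintype 𝒜]
    (l n : ℕ)
    (p : 𝒜 → ℝ) (hp : ∀ a, 0 ≤ p a) (hp1 : ∑ a : 𝒜, p a = 1)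
    (M : 𝒜 → Matrix (Fin l) (Fin n) U)
    (htype : ∀ u u' : Fin n → U, typeOf u = typeOf u' →
      (∑ a : 𝒜, if (M a).mulVec u = 0 then p a else 0) =
        (∑ a : 𝒜, if (M a).mulVec u' = 0 then p a else 0))
    -- Im 𝒜 : the union of the images of the matrices in the ensemble
    (ImA : Finset (Fin l → U))
    (hImA : ImA = Finset.univ.filter
      (fun b : Fin l → U => ∃ a : 𝒜, ∃ u : Fin n → U, (M a).mulVec u = b))
    -- H : the set of all types of length n except the type of the zero vector
    (H : Finset (U → ℕ))
    (hH : H = ((Finset.univ : Finset (Fin n → U)).erase 0).image typeOf)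
    (Hhat : Finset (U → ℕ)) (hHhatsub : Hhat ⊆ H) (hHhatne : Hhat.Nonempty)
    (α β : ℝ)
    (hα : α = ((ImA.card : ℝ) / (Fintype.card U : ℝ) ^ l) *
      Hhat.sup' hHhatne (fun t => Sspec p M t /
        Sspec (fun _ : Matrix (Fin l) (Fin n) U =>
          1 / (Fintype.card (Matrix (Fin l) (Fin n) U) : ℝ)) id t))
    (hβ : β = ∑ t ∈ H \ Hhat, Sspec p M t) :
    ∀ u : Fin n → U,
      ∑ u' ∈ (Finset.univ.erase u).filter
          (fun u' => α / (ImA.card : ℝ) < collP p (fun a => (M a).mulVec) u u'),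
        collP p (fun a => (M a).mulVec) u u' ≤ β := by
  intro u
  set q : ℝ := (Fintype.card U : ℝ) with hq
  set P : (Fin n → U) → ℝ := fun w => ∑ a : 𝒜, if (M a).mulVec w = 0 then p a else 0 with hP
  have hPnn : ∀ w, 0 ≤ P w := by
    intro w
    apply Finset.sum_nonneg
    intro a _
    split
    · exact hp a
    · exact le_rfl
  -- nonemptiness facts
  have h𝒜 : Nonempty 𝒜 := by
    by_contra h
    rw [not_nonempty_iff] at h
    rw [Finset.univ_eq_empty, Finset.sum_empty] at hp1
    norm_num at hp1
  have hIm0 : (0 : Fin l → U) ∈ ImA := by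
    rw [hImA]
    exact Finset.mem_filter.mpr ⟨Finset.mem_univ _,
      ⟨Classical.arbitrary 𝒜, 0, Matrix.mulVec_zero _⟩⟩
  have hImpos : 0 < (ImA.card : ℝ) := by
    exact_mod_cast Finset.card_pos.mpr ⟨0, hIm0⟩
  have hqpos : 0 < q := by
    rw [hq]; exact_mod_cast Fintype.card_pos
  have hqlpos : 0 < q ^ l := pow_pos hqpos l
  -- vectors of a type in H are nonzero
  have hne0 : ∀ t ∈ H, ∀ w : Fin n → U, typeOf w = t → w ≠ 0 := by
    intro t ht w hwt hw0
    rw [hH] at ht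
    obtain ⟨w₀, hw₀mem, hw₀t⟩ := Finset.mem_image.mp ht
    have hw₀ne := Finset.ne_of_mem_erase hw₀mem
    apply hw₀ne
    apply typeOf_zero_eq
    rw [hw₀t, ← hwt, hw0]
  -- membership of type in H for nonzero vectors
  have hmemH : ∀ w : Fin n → U, w ≠ 0 → typeOf w ∈ H := by
    intro w hw
    rw [hH]
    exact Finset.mem_image.mpr ⟨w, Finset.mem_erase.mpr ⟨hw, Finset.mem_univ _⟩, rfl⟩
  -- spectrum of the actual ensemble
  have hSp : ∀ t : U → ℕ, ∀ w : Fin n → U, typeOf w = t →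
      Sspec p M t = ((Finset.univ.filter fun w' : Fin n → U => typeOf w' = t).card : ℝ)
        * P w := by
    intro t w hwt
    rw [Sspec_eq]
    rw [Finset.sum_congr rfl (fun w' hw' => htype w' w (by
      rw [hwt, (Finset.mem_filter.mp hw').2]))]
    rw [Finset.sum_const, nsmul_eq_mul]
  -- spectrum of the uniform ensemble
  have hSu : ∀ t ∈ H,
      Sspec (fun _ : Matrix (Fin l) (Fin n) U =>
          1 / (Fintype.card (Matrix (Fin l) (Fin n) U) : ℝ)) id t
        = ((Finset.univ.filter fun w' : Fin n → U => typeOf w' = t).card : ℝ) / q ^ l := by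
    intro t ht
    rw [Sspec_eq]
    have hNpos : 0 < (Fintype.card (Matrix (Fin l) (Fin n) U) : ℝ) := by
      exact_mod_cast Fintype.card_pos
    have hinner : ∀ w ∈ Finset.univ.filter (fun w : Fin n → U => typeOf w = t),
        (∑ A : Matrix (Fin l) (Fin n) U,
          if (id A).mulVec w = 0 then 1 / (Fintype.card (Matrix (Fin l) (Fin n) U) : ℝ) else 0)
          = 1 / q ^ l := by
      intro w hw
      have hw0 : w ≠ 0 := hne0 t ht w (Finset.mem_filter.mp hw).2
      have hcount := card_ker_mulVec (l := l) w hw0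
      simp only [id_eq]
      rw [← Finset.sum_filter, Finset.sum_const, nsmul_eq_mul]
      have hthis : ((Finset.univ.filter fun A : Matrix (Fin l) (Fin n) U =>
          A.mulVec w = 0).card : ℝ) * q ^ l
            = (Fintype.card (Matrix (Fin l) (Fin n) U) : ℝ) := by
        rw [hq]
        exact_mod_cast hcount
      rw [mul_one_div, div_eq_div_iff hNpos.ne' hqlpos.ne', one_mul]
      exact hthis
    rw [Finset.sum_congr rfl hinner, Finset.sum_const, nsmul_eq_mul]
    ring
  -- key bound: vectors with type in Hhat have small collision probability
  have hbound : ∀ w : Fin n → U, typeOf w ∈ Hhat → P w ≤ α / (ImA.card : ℝ) := by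
    intro w hw
    set t := typeOf w with htdef
    have htH : t ∈ H := hHhatsub hw
    have hCne : (Finset.univ.filter fun w' : Fin n → U => typeOf w' = t).Nonempty :=
      ⟨w, Finset.mem_filter.mpr ⟨Finset.mem_univ _, rfl⟩⟩
    have hCpos : 0 < ((Finset.univ.filter fun w' : Fin n → U => typeOf w' = t).card : ℝ) := by
      exact_mod_cast Finset.card_pos.mpr hCne
    have hft : Sspec p M t /
        Sspec (fun _ : Matrix (Fin l) (Fin n) U =>
          1 / (Fintype.card (Matrix (Fin l) (Fin n) U) : ℝ)) id t = P w * q ^ l := by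
      rw [hSp t w rfl, hSu t htH]
      field_simp
    have hle := Finset.le_sup' (f := fun t => Sspec p M t /
        Sspec (fun _ : Matrix (Fin l) (Fin n) U =>
          1 / (Fintype.card (Matrix (Fin l) (Fin n) U) : ℝ)) id t) hw
    rw [hft] at hle
    have hαdiv : α / (ImA.card : ℝ)
        = (Hhat.sup' hHhatne (fun t => Sspec p M t /
            Sspec (fun _ : Matrix (Fin l) (Fin n) U =>
              1 / (Fintype.card (Matrix (Fin l) (Fin n) U) : ℝ)) id t)) / q ^ l := by
      rw [hα]
      field_simp
    rw [hαdiv]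
    calc P w = P w * q ^ l / q ^ l := by field_simp
    _ ≤ _ := by gcongr
  -- rewrite collision probability via difference vector
  have hcoll : ∀ u' : Fin n → U, collP p (fun a => (M a).mulVec) u u' = P (u - u') := by
    intro u'
    unfold collP
    apply Finset.sum_congr rfl
    intro a _
    have hiff : ((M a).mulVec u = (M a).mulVec u') ↔ ((M a).mulVec (u - u') = 0) := by
      rw [Matrix.mulVec_sub, sub_eq_zero]
    simp only [hiff]
  -- reindex the sum via w = u - u'
  have hreindex : ∑ u' ∈ (Finset.univ.erase u).filter
        (fun u' => α / (ImA.card : ℝ) < collP p (fun a => (M a).mulVec) u u'),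
      collP p (fun a => (M a).mulVec) u u'
      = ∑ w ∈ ((Finset.univ : Finset (Fin n → U)).erase 0).filter
          (fun w => α / (ImA.card : ℝ) < P w), P w := by
    apply Finset.sum_nbij' (i := fun u' => u - u') (j := fun w => u - w)
    · intro u' hu'
      obtain ⟨h1, h2⟩ := Finset.mem_filter.mp hu'
      refine Finset.mem_filter.mpr ⟨Finset.mem_erase.mpr ⟨?_, Finset.mem_univ _⟩, ?_⟩
      · exact sub_ne_zero.mpr (Finset.ne_of_mem_erase h1).symm
      · rwa [← hcoll]
    · intro w hw
      obtain ⟨h1, h2⟩ := Finset.mem_filter.mp hw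
      refine Finset.mem_filter.mpr ⟨Finset.mem_erase.mpr ⟨?_, Finset.mem_univ _⟩, ?_⟩
      · intro h
        exact Finset.ne_of_mem_erase h1 (sub_eq_self.mp h)
      · rw [hcoll]
        simpa using h2
    · intro u' _
      simp
    · intro w _
      simp
    · intro u' _; exact hcoll u'
  rw [hreindex, hβ]
  -- sum over H \ Hhat of spectra equals sum over the relevant vectors
  have hβeq : ∑ t ∈ H \ Hhat, Sspec p M t
      = ∑ w ∈ Finset.univ.filter (fun w : Fin n → U => typeOf w ∈ H \ Hhat), P w := by
    rw [← Finset.sum_fiberwise_of_maps_to (g := typeOf)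
      (fun w hw => (Finset.mem_filter.mp hw).2) P]
    apply Finset.sum_congr rfl
    intro t ht
    rw [Sspec_eq]
    apply Finset.sum_congr _ (fun w _ => rfl)
    ext w
    simp only [Finset.mem_filter, Finset.mem_univ, true_and]
    constructor
    · intro h; exact ⟨h ▸ ht, h⟩
    · intro h; exact h.2
  rw [hβeq]
  apply Finset.sum_le_sum_of_subset_of_nonneg
  · intro w hw
    obtain ⟨h1, h2⟩ := Finset.mem_filter.mp hw
    have hw0 : w ≠ 0 := Finset.ne_of_mem_erase h1
    refine Finset.mem_filter.mpr ⟨Finset.mem_univ _, Finset.mem_sdiff.mpr ⟨hmemH w hw0, ?_⟩⟩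
    intro hcon
    exact absurd h2 (not_lt.mpr (hbound w hcon))
  · intro w _ _
    exact hPnn w
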